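/- Suppose 0 < α < ω e^γ < ω. Then for all t > 0, ω(1 − e^γ)·exp(−α t) + (ω e^γ − α)·exp(−ω t) + (α − ω)·exp(−ω e^γ t) > 0. -/

import Mathlib

open Real

theorem null_subcase_1_1 (α ω γ : ℝ) (hα : 0 < α) (h1 : α < ω * exp γ) (h2 : ω * exp γ < ω) :
    ∀ t : ℝ, 0 < t →
      0 < ω * (1 - exp γ) * exp (-α * t) + (ω * exp γ - α) * exp (-ω * t)
            + (α - ω) * exp (-(ω * exp γ) * t) := by
  intro t ht
  set a : ℝ := α * t with ha_def
  set b : ℝ := ω * exp γ * t with hb_def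
  set c : ℝ := ω * t with hc_def
  clear_value a b c
  have hab : a < b := by rw [ha_def, hb_def]; exact mul_lt_mul_of_pos_right h1 ht
  have hbc : b < c := by rw [hb_def, hc_def]; exact mul_lt_mul_of_pos_right h2 ht
  have hac : a < c := hab.trans hbc
  have hca : (0:ℝ) < c - a := by linarith
  have hu : (0:ℝ) < (c - b) / (c - a) := div_pos (by linarith) hca
  have hv : (0:ℝ) < (b - a) / (c - a) := div_pos (by linarith) hca
  have hsum : (c - b) / (c - a) + (b - a) / (c - a) = 1 := by
    field_simp
    ring
  have hne : (-a : ℝ) ≠ -c := by intro h; linarith [neg_injective h]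
  have key := strictConvexOn_exp.2 (Set.mem_univ (-a)) (Set.mem_univ (-c)) hne hu hv hsum
  simp only [smul_eq_mul] at key
  have hca' : c - a ≠ 0 := ne_of_gt hca
  have harg : (c - b) / (c - a) * (-a) + (b - a) / (c - a) * (-c) = -b := by
    field_simp
    ring
  rw [harg] at key
  -- key : exp (-b) < (c-b)/(c-a) * exp (-a) + (b-a)/(c-a) * exp (-c)
  have key2 : (c - a) * exp (-b) < (c - b) * exp (-a) + (b - a) * exp (-c) := by
    have h3 := mul_lt_mul_of_pos_left key hca
    have heq : (c - a) * ((c - b) / (c - a) * exp (-a) + (b - a) / (c - a) * exp (-c))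
        = (c - b) * exp (-a) + (b - a) * exp (-c) := by
      field_simp
    rw [heq] at h3
    exact h3
  have e1 : exp (-α * t) = exp (-a) := by rw [ha_def]; ring_nf
  have e2 : exp (-ω * t) = exp (-c) := by rw [hc_def]; ring_nf
  have e3 : exp (-(ω * exp γ) * t) = exp (-b) := by rw [hb_def]; ring_nf
  rw [e1, e2, e3]
  have h4 : 0 < t * (ω * (1 - exp γ) * exp (-a) + (ω * exp γ - α) * exp (-c) + (α - ω) * exp (-b)) := by
    have : t * (ω * (1 - exp γ) * exp (-a) + (ω * exp γ - α) * exp (-c) + (α - ω) * exp (-b))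
        = (c - b) * exp (-a) + (b - a) * exp (-c) - (c - a) * exp (-b) := by
      rw [ha_def, hb_def, hc_def]; ring
    rw [this]; linarith
  nlinarith [h4]
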